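/- Derivative estimate with a spectral parameter (Lemma 2.7, abstract form). For every integer n ≥ 1, every δ > 0 and every j ∈ {1,…,n} there exists a constant C > 0 such that for every n-times continuously differentiable function g : [0,δ] → ℂ and every real r ≥ 1: sup_{x∈[0,δ]} |g^{(j)}(x)| ≤ C·( r^j · sup_{x∈[0,δ]} |g(x)| + sup_{x∈[0,δ]} |g^{(n)}(x) − r^n g(x)| ). -/

import Mathlib

noncomputable section

open MeasureTheory Filter Topology


private lemma supIcc_bound {δ : ℝ} (hδ : 0 < δ) (F : ℝ → ℂ)
    (hF : ContinuousOn F (Set.Icc 0 δ)) :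
    ∀ x ∈ Set.Icc (0:ℝ) δ, ‖F x‖ ≤ ⨆ y : Set.Icc (0:ℝ) δ, ‖F y.val‖ := by
  intro x hx
  have hbdd : BddAbove (Set.range fun y : Set.Icc (0:ℝ) δ => ‖F y.val‖) := by
    have h1 : (Set.range fun y : Set.Icc (0:ℝ) δ => ‖F y.val‖)
        = (fun y => ‖F y‖) '' Set.Icc (0:ℝ) δ := by
      ext a
      constructor
      · rintro ⟨⟨y, hy⟩, rfl⟩; exact ⟨y, hy, rfl⟩
      · rintro ⟨y, hy, rfl⟩; exact ⟨⟨y, hy⟩, rfl⟩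
    rw [h1]
    exact (isCompact_Icc.image_of_continuousOn hF.norm).bddAbove
  exact le_ciSup hbdd ⟨x, hx⟩

private lemma stepA {δ : ℝ} (hδ : 0 < δ) {f f' f'' : ℝ → ℂ}
    (hf : ∀ x ∈ Set.Icc (0:ℝ) δ, HasDerivWithinAt f (f' x) (Set.Icc (0:ℝ) δ) x)
    (hf' : ∀ x ∈ Set.Icc (0:ℝ) δ, HasDerivWithinAt f' (f'' x) (Set.Icc (0:ℝ) δ) x)
    {M0 M2 : ℝ} (h0 : ∀ x ∈ Set.Icc (0:ℝ) δ, ‖f x‖ ≤ M0)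
    (h2 : ∀ x ∈ Set.Icc (0:ℝ) δ, ‖f'' x‖ ≤ M2)
    {ℓ : ℝ} (hℓ : 0 < ℓ) (hℓδ : ℓ ≤ δ) {x : ℝ} (hx : x ∈ Set.Icc (0:ℝ) δ) :
    ‖f' x‖ ≤ 4 * M0 / ℓ + M2 * ℓ / 2 := by
  have hM2 : 0 ≤ M2 := le_trans (norm_nonneg _) (h2 x hx)
  obtain ⟨y, hy, hyx⟩ : ∃ y ∈ Set.Icc (0:ℝ) δ, |y - x| = ℓ / 2 := by
    rcases le_or_gt (x + ℓ/2) δ with h | h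
    · exact ⟨x + ℓ/2, ⟨by linarith [hx.1], h⟩,
        by rw [add_sub_cancel_left, abs_of_pos (by linarith)]⟩
    · refine ⟨x - ℓ/2, ⟨by linarith [hx.2], by linarith [hx.2]⟩, ?_⟩
      rw [show x - ℓ/2 - x = -(ℓ/2) by ring, abs_neg, abs_of_pos (by linarith)]
  set seg := Set.Icc (min x y) (max x y) with hseg
  have hsub : seg ⊆ Set.Icc (0:ℝ) δ := Set.Icc_subset_Icc (le_min hx.1 hy.1) (max_le hx.2 hy.2)
  have hxseg : x ∈ seg := ⟨min_le_left _ _, le_max_left _ _⟩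
  have hyseg : y ∈ seg := ⟨min_le_right _ _, le_max_right _ _⟩
  have hconv : Convex ℝ seg := convex_Icc _ _
  have hdist : ∀ t ∈ seg, |t - x| ≤ ℓ / 2 := by
    intro t ht
    have h1 := ht.1
    have h2' := ht.2
    rw [← hyx]
    rcases le_total x y with h | h
    · rw [min_eq_left h] at h1; rw [max_eq_right h] at h2'
      rw [abs_of_nonneg (by linarith : (0:ℝ) ≤ y - x), abs_le]
      constructor <;> linarith
    · rw [min_eq_right h] at h1; rw [max_eq_left h] at h2'
      rw [abs_of_nonpos (by linarith : y - x ≤ 0), abs_le]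
      constructor <;> linarith
  have hstep1 : ∀ t ∈ seg, ‖f' t - f' x‖ ≤ M2 * (ℓ/2) := by
    intro t ht
    calc ‖f' t - f' x‖ ≤ M2 * ‖t - x‖ :=
          Convex.norm_image_sub_le_of_norm_hasDerivWithin_le hf' h2 (convex_Icc _ _) hx (hsub ht)
      _ ≤ M2 * (ℓ/2) := by
          apply mul_le_mul_of_nonneg_left _ hM2
          rw [Real.norm_eq_abs]; exact hdist t ht
  have hφ : ∀ t ∈ seg, HasDerivWithinAt (fun u : ℝ => f u - u • f' x) (f' t - f' x) seg t := by
    intro t ht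
    have h1 : HasDerivWithinAt (fun u : ℝ => u • f' x) ((1:ℝ) • f' x) seg t :=
      (hasDerivWithinAt_id t seg).smul_const (f' x)
    rw [one_smul] at h1
    exact ((hf t (hsub ht)).mono hsub).sub h1
  have hkey : ‖(f y - y • f' x) - (f x - x • f' x)‖ ≤ M2 * (ℓ/2) * ‖y - x‖ :=
    Convex.norm_image_sub_le_of_norm_hasDerivWithin_le hφ hstep1 hconv hxseg hyseg
  have hid : (y - x) • f' x = (f y - f x) - ((f y - y • f' x) - (f x - x • f' x)) := by
    rw [sub_smul]; abel
  have hnx : ‖y - x‖ = ℓ / 2 := by rw [Real.norm_eq_abs, hyx]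
  have hmain : (ℓ/2) * ‖f' x‖ ≤ 2*M0 + M2*(ℓ/2)*(ℓ/2) := by
    have h1 : ‖(y - x) • f' x‖ = (ℓ/2) * ‖f' x‖ := by
      rw [norm_smul, Real.norm_eq_abs, hyx]
    have h2'' : ‖f y - f x‖ ≤ 2*M0 := by
      calc ‖f y - f x‖ ≤ ‖f y‖ + ‖f x‖ := norm_sub_le _ _
        _ ≤ 2*M0 := by linarith [h0 y hy, h0 x hx]
    have h3 : ‖(f y - y • f' x) - (f x - x • f' x)‖ ≤ M2*(ℓ/2)*(ℓ/2) := by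
      rw [hnx] at hkey; exact hkey
    calc (ℓ/2) * ‖f' x‖ = ‖(y - x) • f' x‖ := h1.symm
      _ = ‖(f y - f x) - ((f y - y • f' x) - (f x - x • f' x))‖ := by rw [hid]
      _ ≤ ‖f y - f x‖ + ‖(f y - y • f' x) - (f x - x • f' x)‖ := norm_sub_le _ _
      _ ≤ 2*M0 + M2*(ℓ/2)*(ℓ/2) := by linarith
  rw [show 4 * M0 / ℓ + M2 * ℓ / 2 = (2*M0 + M2*(ℓ/2)*(ℓ/2)) / (ℓ/2) by field_simp; ring]
  rw [le_div_iff₀ (by linarith)]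
  linarith

set_option maxHeartbeats 1000000 in
/-- **Lemma 2.7 (abstract form): derivative estimate with a spectral parameter.**
For `n ≥ 1`, `δ > 0`, `1 ≤ j ≤ n` there is `C > 0` such that for every `n`-times
continuously differentiable `g : [0,δ] → ℂ` and every `r ≥ 1`:
`sup |g^{(j)}| ≤ C(r^j sup|g| + sup|g^{(n)} − r^n g|)` on `[0,δ]`. -/
theorem derivative_estimate_with_parameter
    (n : ℕ) (hn : 1 ≤ n) (δ : ℝ) (hδ : 0 < δ) (j : ℕ) (hj₁ : 1 ≤ j) (hj₂ : j ≤ n) :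
    ∃ C : ℝ, 0 < C ∧
      ∀ g : ℝ → ℂ, ContDiffOn ℝ n g (Set.Icc 0 δ) →
        ∀ r : ℝ, 1 ≤ r →
          (⨆ x : Set.Icc (0:ℝ) δ, ‖iteratedDerivWithin j g (Set.Icc 0 δ) x.val‖) ≤
            C * (r ^ j * (⨆ x : Set.Icc (0:ℝ) δ, ‖g x.val‖) +
              ⨆ x : Set.Icc (0:ℝ) δ,
                ‖iteratedDerivWithin n g (Set.Icc 0 δ) x.val - (r : ℂ) ^ n * g x.val‖) := by
  have ud : UniqueDiffOn ℝ (Set.Icc (0:ℝ) δ) := uniqueDiffOn_Icc hδ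
  haveI : Nonempty (Set.Icc (0:ℝ) δ) := ⟨⟨0, le_refl 0, hδ.le⟩⟩
  set K : ℝ := max 1 (3 * 36^n / δ) with hKdef
  have hK1 : (1:ℝ) ≤ K := le_max_left _ _
  have hKpos : (0:ℝ) < K := lt_of_lt_of_le one_pos hK1
  refine ⟨K^n + 6^(n^2), by positivity, ?_⟩
  intro g hg r hr
  have hr0 : (0:ℝ) < r := lt_of_lt_of_le one_pos hr
  set M : ℕ → ℝ :=
    fun k => ⨆ x : Set.Icc (0:ℝ) δ, ‖iteratedDerivWithin k g (Set.Icc 0 δ) x.val‖ with hMdef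
  set E : ℝ := ⨆ x : Set.Icc (0:ℝ) δ,
      ‖iteratedDerivWithin n g (Set.Icc 0 δ) x.val - (r : ℂ) ^ n * g x.val‖ with hEdef
  have hgoalL : (⨆ x : Set.Icc (0:ℝ) δ, ‖iteratedDerivWithin j g (Set.Icc 0 δ) x.val‖) = M j := by
    rw [hMdef]
  have hgoalM0 : (⨆ x : Set.Icc (0:ℝ) δ, ‖g x.val‖) = M 0 := by
    rw [hMdef]; simp only [iteratedDerivWithin_zero]
  rw [hgoalL, hgoalM0]
  -- basic facts about M and E
  have hMb : ∀ k, k ≤ n → ∀ x ∈ Set.Icc (0:ℝ) δ,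
      ‖iteratedDerivWithin k g (Set.Icc 0 δ) x‖ ≤ M k := by
    intro k hk
    rw [hMdef]
    exact supIcc_bound hδ _ (hg.continuousOn_iteratedDerivWithin (by exact_mod_cast hk) ud)
  have hMnonneg : ∀ k, 0 ≤ M k := by
    intro k; rw [hMdef]; exact Real.iSup_nonneg fun _ => norm_nonneg _
  have hMle : ∀ (k : ℕ) (c : ℝ),
      (∀ x ∈ Set.Icc (0:ℝ) δ, ‖iteratedDerivWithin k g (Set.Icc 0 δ) x‖ ≤ c) → M k ≤ c := by
    intro k c h
    rw [hMdef]
    exact ciSup_le fun x => h x x.2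
  have hg0 : ∀ x ∈ Set.Icc (0:ℝ) δ, ‖g x‖ ≤ M 0 := by
    intro x hx
    have := hMb 0 (by omega) x hx
    simpa [iteratedDerivWithin_zero] using this
  have hEb : ∀ x ∈ Set.Icc (0:ℝ) δ,
      ‖iteratedDerivWithin n g (Set.Icc 0 δ) x - (r : ℂ) ^ n * g x‖ ≤ E := by
    rw [hEdef]
    exact supIcc_bound hδ _
      (((hg.continuousOn_iteratedDerivWithin (le_refl _) ud)).sub
        (continuousOn_const.mul (hg.continuousOn)))
  have hE0 : 0 ≤ E := by
    rw [hEdef]; exact Real.iSup_nonneg fun _ => norm_nonneg _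
  have hMn : M n ≤ r^n * M 0 + E := by
    apply hMle
    intro x hx
    have h1 : ‖(r:ℂ)^n * g x‖ = r^n * ‖g x‖ := by
      rw [norm_mul, norm_pow, Complex.norm_real, Real.norm_eq_abs, abs_of_pos hr0]
    calc ‖iteratedDerivWithin n g (Set.Icc 0 δ) x‖
        ≤ ‖iteratedDerivWithin n g (Set.Icc 0 δ) x - (r:ℂ)^n * g x‖ + ‖(r:ℂ)^n * g x‖ := by
          calc ‖iteratedDerivWithin n g (Set.Icc 0 δ) x‖
              = ‖(iteratedDerivWithin n g (Set.Icc 0 δ) x - (r:ℂ)^n * g x) + (r:ℂ)^n * g x‖ := by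
                rw [sub_add_cancel]
            _ ≤ _ := norm_add_le _ _
      _ ≤ E + r^n * ‖g x‖ := by rw [h1]; exact add_le_add (hEb x hx) (le_refl _)
      _ ≤ r^n * M 0 + E := by
          have := hg0 x hx
          have hrn : (0:ℝ) ≤ r^n := by positivity
          nlinarith
  -- the recurrence
  have recur : ∀ m : ℕ, m + 2 ≤ n → ∀ ℓ : ℝ, 0 < ℓ → ℓ ≤ δ →
      M (m+1) ≤ 4 * M m / ℓ + M (m+2) * ℓ / 2 := by
    intro m hm ℓ h1 h2
    have hdm : DifferentiableOn ℝ (iteratedDerivWithin m g (Set.Icc 0 δ)) (Set.Icc 0 δ) :=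
      hg.differentiableOn_iteratedDerivWithin (by exact_mod_cast (by omega : m < n)) ud
    have hdm1 : DifferentiableOn ℝ (iteratedDerivWithin (m+1) g (Set.Icc 0 δ)) (Set.Icc 0 δ) :=
      hg.differentiableOn_iteratedDerivWithin (by exact_mod_cast (by omega : m + 1 < n)) ud
    have hf : ∀ x ∈ Set.Icc (0:ℝ) δ, HasDerivWithinAt (iteratedDerivWithin m g (Set.Icc 0 δ))
        (iteratedDerivWithin (m+1) g (Set.Icc 0 δ) x) (Set.Icc (0:ℝ) δ) x := by
      intro x hx
      rw [iteratedDerivWithin_succ]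
      exact (hdm x hx).hasDerivWithinAt
    have hf' : ∀ x ∈ Set.Icc (0:ℝ) δ, HasDerivWithinAt (iteratedDerivWithin (m+1) g (Set.Icc 0 δ))
        (iteratedDerivWithin (m+2) g (Set.Icc 0 δ) x) (Set.Icc (0:ℝ) δ) x := by
      intro x hx
      rw [show iteratedDerivWithin (m+2) g (Set.Icc 0 δ) x = derivWithin (iteratedDerivWithin (m+1) g (Set.Icc 0 δ)) (Set.Icc 0 δ) x from congrFun iteratedDerivWithin_succ x]
      exact (hdm1 x hx).hasDerivWithinAt
    apply hMle
    intro x hx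
    exact stepA hδ hf hf' (hMb m (by omega)) (hMb (m+2) (by omega)) h1 h2 hx
  -- the spectral scale
  set t : ℝ := max r (3 * 36^n / δ) with htdef
  have htr : r ≤ t := le_max_left _ _
  have ht1 : (1:ℝ) ≤ t := le_trans hr htr
  have htpos : (0:ℝ) < t := lt_of_lt_of_le one_pos ht1
  have htne : t ≠ 0 := ne_of_gt htpos
  have htδ : ∀ k, k ≤ n → 3 * 36^k / t ≤ δ := by
    intro k hk
    rw [div_le_iff₀ htpos]
    have h1 : (3:ℝ) * 36^k ≤ 3 * 36^n := by
      have : (36:ℝ)^k ≤ 36^n := pow_le_pow_right₀ (by norm_num) hk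
      linarith
    have h2 : 3 * 36^n / δ ≤ t := le_max_right _ _
    rw [div_le_iff₀ hδ] at h2
    nlinarith
  -- weighted maximum
  set F : ℕ → ℝ := fun k => M k / t^k * 6^(k^2) with hFdef
  have hFnonneg : ∀ k, 0 ≤ F k := by
    intro k; rw [hFdef]
    have := hMnonneg k
    positivity
  have hne : (Finset.range (n+1)).Nonempty := ⟨0, by simp⟩
  set Q : ℝ := (Finset.range (n+1)).sup' hne F with hQdef
  have hFQ : ∀ k, k ≤ n → F k ≤ Q := by
    intro k hk
    rw [hQdef]
    exact Finset.le_sup' F (Finset.mem_range.mpr (by omega))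
  obtain ⟨k₀, hk₀mem, hk₀⟩ := Finset.exists_mem_eq_sup' hne F
  rw [← hQdef] at hk₀
  have hk₀n : k₀ ≤ n := by have := Finset.mem_range.mp hk₀mem; omega
  have hQle : Q ≤ F 0 + F n := by
    by_cases h0 : k₀ = 0
    · rw [hk₀, h0]
      exact le_add_of_nonneg_right (hFnonneg n)
    · by_cases hnn : k₀ = n
      · rw [hk₀, hnn]
        exact le_add_of_nonneg_left (hFnonneg 0)
      · -- interior case
        obtain ⟨m, rfl⟩ : ∃ m, k₀ = m + 1 := ⟨k₀ - 1, by omega⟩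
        have hm2 : m + 2 ≤ n := by omega
        have hℓpos : (0:ℝ) < 3 * 36^(m+1) / t := by positivity
        have hℓδ : 3 * 36^(m+1) / t ≤ δ := htδ (m+1) (by omega)
        have hrec := recur m hm2 _ hℓpos hℓδ
        have hFineq : F (m+1) ≤ 2/9 * F m + 1/4 * F (m+2) := by
          have hYpos : (0:ℝ) < 6^m := by positivity
          have hYne : ((6:ℝ)^m) ≠ 0 := ne_of_gt hYpos
          have hPpos : (0:ℝ) < 6^(m^2) := by positivity
          have hPne : ((6:ℝ)^(m^2)) ≠ 0 := ne_of_gt hPpos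
          have hupos : (0:ℝ) < t^m := pow_pos htpos m
          have hune : (t^m) ≠ 0 := ne_of_gt hupos
          have e36 : (36:ℝ)^(m+1) = ((6:ℝ)^m)^2 * 36 := by
            rw [pow_succ]
            congr 1
            rw [show (36:ℝ) = 6^2 by norm_num, ← pow_mul, ← pow_mul']
          have e6a : (6:ℝ)^((m+1)^2) = 6^(m^2) * (((6:ℝ)^m)^2 * 6) := by
            rw [show (m+1)^2 = m^2 + m*2 + 1 by ring, pow_add, pow_add, pow_mul, pow_one]
            ring
          have e6b : (6:ℝ)^((m+2)^2) = 6^(m^2) * (((6:ℝ)^m)^4 * 1296) := by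
            rw [show (m+2)^2 = m^2 + m*4 + 4 by ring, pow_add, pow_add, pow_mul]
            norm_num
            ring
          have et1 : t^(m+1) = t^m * t := pow_succ t m
          have et2 : t^(m+2) = t^m * t^2 := by rw [pow_add]
          rw [hFdef]
          simp only
          rw [e6a, e6b, et1, et2]
          have hstep : M (m+1) / (t^m * t) * ((6:ℝ)^(m^2) * (((6:ℝ)^m)^2 * 6))
              ≤ (4 * M m / (3 * 36^(m+1) / t) + M (m+2) * (3 * 36^(m+1) / t) / 2) / (t^m * t)
                * ((6:ℝ)^(m^2) * (((6:ℝ)^m)^2 * 6)) := by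
            gcongr
          refine le_trans hstep (le_of_eq ?_)
          rw [e36]
          field_simp
          ring
        have hQ1 : Q ≤ 2/9 * Q + 1/4 * Q := by
          calc Q = F (m+1) := hk₀
            _ ≤ 2/9 * F m + 1/4 * F (m+2) := hFineq
            _ ≤ 2/9 * Q + 1/4 * Q := by
                have h1 : F m ≤ Q := hFQ m (by omega)
                have h2 : F (m+2) ≤ Q := hFQ (m+2) (by omega)
                linarith
        have hQ0 : Q ≤ 0 := by linarith
        linarith [hFnonneg 0, hFnonneg n]
  -- put everything together
  have hFj : F j ≤ F 0 + F n := le_trans (hFQ j hj₂) hQle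
  set d : ℕ := n - j with hddef
  have hjd : j + d = n := by omega
  have htj : (0:ℝ) < t^j := pow_pos htpos j
  have htn : (0:ℝ) < t^n := pow_pos htpos n
  have htd : (0:ℝ) < t^d := pow_pos htpos d
  have h1 : M j ≤ t^j * M 0 + 6^(n^2) * (M n / t^d) := by
    rw [hFdef] at hFj
    simp only [pow_zero, Nat.zero_eq, ne_eq] at hFj
    -- hFj : M j / t^j * 6^(j^2) ≤ M 0 / 1 * 6^(0^2) + M n / t^n * 6^(n^2)
    have h6 : (1:ℝ) ≤ 6^(j^2) := one_le_pow₀ (by norm_num)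
    have h2 : M j / t^j ≤ M j / t^j * 6^(j^2) :=
      le_mul_of_one_le_right (div_nonneg (hMnonneg j) htj.le) h6
    have h3 : M j / t^j ≤ M 0 + M n / t^n * 6^(n^2) := by
      refine le_trans h2 (le_trans hFj ?_)
      simp
    rw [div_le_iff₀ htj] at h3
    calc M j ≤ (M 0 + M n / t^n * 6^(n^2)) * t^j := h3
      _ = t^j * M 0 + 6^(n^2) * (M n / t^d) := by
          rw [show t^n = t^j * t^d by rw [← pow_add, hjd]]
          field_simp
  have hKr : t ≤ K * r := by
    rw [htdef, hKdef]
    apply max_le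
    · nlinarith [le_max_left (1:ℝ) (3*36^n/δ)]
    · calc 3*36^n/δ ≤ (3*36^n/δ) * r := le_mul_of_one_le_right (by positivity) hr
        _ ≤ (max 1 (3*36^n/δ)) * r := by
            apply mul_le_mul_of_nonneg_right (le_max_right _ _) (by linarith)
  have htjK : t^j ≤ K^n * r^j := by
    calc t^j ≤ (K*r)^j := pow_le_pow_left₀ htpos.le hKr j
      _ = K^j * r^j := mul_pow _ _ _
      _ ≤ K^n * r^j := by
          apply mul_le_mul_of_nonneg_right (pow_le_pow_right₀ hK1 hj₂) (by positivity)
  have hrd : (0:ℝ) < r^d := pow_pos hr0 d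
  have hdivd : M n / t^d ≤ (r^n * M 0 + E) / r^d := by
    have hnum : (0:ℝ) ≤ r^n * M 0 + E :=
      add_nonneg (mul_nonneg (by positivity) (hMnonneg 0)) hE0
    apply div_le_div₀ hnum hMn hrd
    exact pow_le_pow_left₀ hr0.le htr d
  have h2 : M j ≤ (K^n * r^j) * M 0 + 6^(n^2) * ((r^n * M 0 + E) / r^d) := by
    calc M j ≤ t^j * M 0 + 6^(n^2) * (M n / t^d) := h1
      _ ≤ (K^n * r^j) * M 0 + 6^(n^2) * ((r^n * M 0 + E) / r^d) := by
          gcongr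
          exact hMnonneg 0
  have h3 : (K^n * r^j) * M 0 + 6^(n^2) * ((r^n * M 0 + E) / r^d)
      = K^n * (r^j * M 0) + 6^(n^2) * (r^j * M 0) + 6^(n^2) * (E / r^d) := by
    rw [show r^n = r^j * r^d by rw [← pow_add, hjd]]
    field_simp
    ring
  have h4 : E / r^d ≤ E := by
    apply div_le_self hE0 (one_le_pow₀ hr)
  have h5 : (0:ℝ) ≤ 6^(n^2) := by positivity
  have h6 : (0:ℝ) ≤ K^n * E := mul_nonneg (by positivity) hE0
  have h7 : (0:ℝ) ≤ r^j * M 0 := mul_nonneg (by positivity) (hMnonneg 0)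
  calc M j ≤ (K^n * r^j) * M 0 + 6^(n^2) * ((r^n * M 0 + E) / r^d) := h2
    _ = K^n * (r^j * M 0) + 6^(n^2) * (r^j * M 0) + 6^(n^2) * (E / r^d) := h3
    _ ≤ K^n * (r^j * M 0) + 6^(n^2) * (r^j * M 0) + 6^(n^2) * E := by nlinarith
    _ ≤ (K^n + 6^(n^2)) * (r^j * M 0 + E) := by nlinarith
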